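/- arXiv:1504.07502 — 4 statements merged into one kernel-verified Lean document; each statement's English description precedes it below -/
import Mathlib

section
/- Let V be a real inner product space of even dimension 2ℓ and let Q be the quadratic form Q(v) = -‖v‖² on V. Then there exists a ℂ-algebra isomorphism between the complexified Clifford algebra Cl(V) ⊗_ℝ ℂ (the Clifford algebra over ℂ of the base change of Q to ℂ ⊗_ℝ V) and the algebra of 2^ℓ × 2^ℓ complex matrices; equivalently, Cl(V) ⊗_ℝ ℂ ≅ End_ℂ(S) for a complex vector space S of dimension 2^ℓ. -/
open TensorProduct

noncomputable section
namespace SpinorAux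

abbrev Qn (n : ℕ) : QuadraticForm ℂ (Fin n → ℂ) :=
  QuadraticMap.weightedSumSquares ℂ (1 : Fin n → ℂ)

lemma Qn_apply (n : ℕ) (v : Fin n → ℂ) : Qn n v = ∑ i, v i * v i := by
  simp [QuadraticMap.weightedSumSquares_apply]

-- generators
abbrev ε {n : ℕ} (i : Fin n) : CliffordAlgebra (Qn n) :=
  CliffordAlgebra.ι (Qn n) (Pi.single i 1)

lemma ε_sq {n : ℕ} (i : Fin n) : ε i * ε i = 1 := by
  rw [CliffordAlgebra.ι_sq_scalar]
  have : Qn n (Pi.single i 1) = 1 := by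
    simp [Qn_apply, Pi.single_apply]
  rw [this]; simp

lemma ε_anticomm {n : ℕ} {i j : Fin n} (h : i ≠ j) :
    ε i * ε j = -(ε j * ε i) := by
  have := CliffordAlgebra.ι_mul_ι_add_swap (Q := Qn n) (Pi.single i 1) (Pi.single j 1)
  have hp : QuadraticMap.polar (Qn n) (Pi.single i 1) (Pi.single j 1) = 0 := by
    have h0 : ∀ k, Pi.single (M := fun _ => ℂ) i 1 k * Pi.single (M := fun _ => ℂ) j 1 k = 0 := by
      intro k
      rcases eq_or_ne k i with rfl | hk
      · simp [Pi.single_apply, h.symm]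
      · simp [Pi.single_apply, hk]
    rw [QuadraticMap.polar, Qn_apply, Qn_apply, Qn_apply, ← Finset.sum_sub_distrib,
      ← Finset.sum_sub_distrib]
    refine Finset.sum_eq_zero fun k _ => ?_
    simp only [Pi.add_apply]
    ring_nf
    linear_combination (2 : ℂ) * h0 k
  rw [hp] at this
  simp only [map_zero] at this
  linear_combination (norm := noncomm_ring) this

/-! ### The 2-dimensional case: `Cl₂(ℂ) ≃ M₂(ℂ)` -/

def γ : Fin 2 → Matrix (Fin 2) (Fin 2) ℂ
  | 0 => !![1, 0; 0, -1]
  | 1 => !![0, 1; 1, 0]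

def gmap : (Fin 2 → ℂ) →ₗ[ℂ] Matrix (Fin 2) (Fin 2) ℂ where
  toFun v := v 0 • γ 0 + v 1 • γ 1
  map_add' x y := by simp [add_smul]; abel
  map_smul' c x := by simp [smul_smul, smul_add]

lemma gmap_sq (v : Fin 2 → ℂ) :
    gmap v * gmap v = algebraMap ℂ (Matrix (Fin 2) (Fin 2) ℂ) (Qn 2 v) := by
  rw [Qn_apply, Fin.sum_univ_two]
  show (v 0 • γ 0 + v 1 • γ 1) * (v 0 • γ 0 + v 1 • γ 1) = _
  ext i j
  fin_cases i <;> fin_cases j <;>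
    simp [γ, Matrix.mul_apply, Matrix.algebraMap_matrix_apply, Fin.sum_univ_two, Matrix.one_apply] <;>
    ring

def φ2 : CliffordAlgebra (Qn 2) →ₐ[ℂ] Matrix (Fin 2) (Fin 2) ℂ :=
  CliffordAlgebra.lift (Qn 2) ⟨gmap, gmap_sq⟩

lemma gmap_single (i : Fin 2) : gmap (Pi.single i 1) = γ i := by
  fin_cases i <;>
    simp [gmap, Pi.single_apply]

lemma φ2_ε (i : Fin 2) : φ2 (ε i) = γ i := by
  rw [φ2, ε, CliffordAlgebra.lift_ι_apply, gmap_single]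

lemma φ2_surj : Function.Surjective φ2 := by
  intro M
  refine ⟨algebraMap ℂ _ ((M 0 0 + M 1 1) / 2) + ((M 0 0 - M 1 1) / 2) • ε 0
    + ((M 0 1 + M 1 0) / 2) • ε 1 + ((M 0 1 - M 1 0) / 2) • (ε 0 * ε 1), ?_⟩
  simp only [map_add, map_smul, map_mul, AlgHom.commutes, φ2_ε]
  ext i j
  fin_cases i <;> fin_cases j <;>
    simp [γ, Matrix.mul_apply, Matrix.algebraMap_matrix_apply, Fin.sum_univ_two,
      Matrix.one_apply] <;> ring

/-! spanning set for `Cl₂` -/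

lemma cl2_span_top :
    Submodule.span ℂ ({1, ε 0, ε 1, ε 0 * ε 1} : Set (CliffordAlgebra (Qn 2))) = ⊤ := by
  set S : Set (CliffordAlgebra (Qn 2)) := {1, ε 0, ε 1, ε 0 * ε 1} with hS
  set a : CliffordAlgebra (Qn 2) := ε 0 with hA
  set b : CliffordAlgebra (Qn 2) := ε 1 with hB
  have ha : a * a = 1 := ε_sq 0
  have hb : b * b = 1 := ε_sq 1
  have hba : b * a = -(a * b) := ε_anticomm (by decide)
  have e1 : b * (a * b) = -a := by rw [← mul_assoc, hba, neg_mul, mul_assoc, hb, mul_one]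
  have e2 : (a * b) * a = -b := by rw [mul_assoc, hba, mul_neg, ← mul_assoc, ha, one_mul]
  have e3 : (a * b) * b = a := by rw [mul_assoc, hb, mul_one]
  have e4 : (a * b) * (a * b) = -1 := by rw [mul_assoc, e1, mul_neg, ha]
  have e5 : a * (a * b) = b := by rw [← mul_assoc, ha, one_mul]
  have h1 : (1 : CliffordAlgebra (Qn 2)) ∈ S := by simp [hS]
  have h2 : a ∈ S := by simp [hS]
  have h3 : b ∈ S := by simp [hS]
  have h4 : a * b ∈ S := by simp [hS]
  have key : ∀ x ∈ S, ∀ y ∈ S, x * y ∈ Submodule.span ℂ S := by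
    intro x hx y hy
    have sub := Submodule.subset_span (R := ℂ) (s := S)
    rcases hx with rfl | rfl | rfl | rfl <;> rcases hy with rfl | rfl | rfl | rfl
    · rw [one_mul]; exact sub h1
    · rw [one_mul]; exact sub h2
    · rw [one_mul]; exact sub h3
    · rw [one_mul]; exact sub h4
    · rw [mul_one]; exact sub h2
    · rw [ha]; exact sub h1
    · exact sub h4
    · rw [e5]; exact sub h3
    · rw [mul_one]; exact sub h3
    · rw [hba]; exact neg_mem (sub h4)
    · rw [hb]; exact sub h1
    · rw [e1]; exact neg_mem (sub h2)
    · rw [mul_one]; exact sub h4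
    · rw [e2]; exact neg_mem (sub h3)
    · rw [e3]; exact sub h2
    · rw [e4]; exact neg_mem (sub h1)
  rw [eq_top_iff]
  rintro x -
  induction x using CliffordAlgebra.induction with
  | algebraMap r =>
      rw [Algebra.algebraMap_eq_smul_one]
      exact Submodule.smul_mem _ _ (Submodule.subset_span h1)
  | ι v =>
      have h' : v = v 0 • Pi.single (M := fun _ => ℂ) 0 1
          + v 1 • Pi.single (M := fun _ => ℂ) 1 1 := by
        funext k; fin_cases k <;> simp [Pi.single_apply]
      have hv : (CliffordAlgebra.ι (Qn 2)) v = v 0 • a + v 1 • b := by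
        conv_lhs => rw [h', map_add, map_smul, map_smul]
      rw [hv]
      exact add_mem (Submodule.smul_mem _ _ (Submodule.subset_span h2))
        (Submodule.smul_mem _ _ (Submodule.subset_span h3))
  | mul x y hx hy =>
      have : x * y ∈ Submodule.span ℂ S * Submodule.span ℂ S := Submodule.mul_mem_mul hx hy
      rw [Submodule.span_mul_span] at this
      refine Submodule.span_le.2 ?_ this
      rintro z ⟨p, hp, q, hq, rfl⟩
      exact key p hp q hq
  | add x y hx hy => exact add_mem hx hy

instance : FiniteDimensional ℂ (CliffordAlgebra (Qn 2)) := by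
  classical
  have hfg : (⊤ : Submodule ℂ (CliffordAlgebra (Qn 2))).FG :=
    ⟨({1, ε 0, ε 1, ε 0 * ε 1} : Finset (CliffordAlgebra (Qn 2))),
      by rw [← cl2_span_top]; congr 1; simp⟩
  exact Module.finite_def.2 hfg

lemma cl2_finrank_le : Module.finrank ℂ (CliffordAlgebra (Qn 2)) ≤ 4 := by
  classical
  have h := cl2_span_top
  have heq : Module.finrank ℂ (CliffordAlgebra (Qn 2))
      = Module.finrank ℂ (Submodule.span ℂ ({1, ε 0, ε 1, ε 0 * ε 1} :
        Set (CliffordAlgebra (Qn 2)))) := by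
    rw [h, finrank_top]
  rw [heq]
  refine le_trans (finrank_span_le_card _) ?_
  rw [Set.toFinset_insert, Set.toFinset_insert, Set.toFinset_insert, Set.toFinset_singleton]
  refine le_trans (Finset.card_insert_le _ _) (Nat.succ_le_succ ?_)
  refine le_trans (Finset.card_insert_le _ _) (Nat.succ_le_succ ?_)
  refine le_trans (Finset.card_insert_le _ _) (Nat.succ_le_succ ?_)
  simp

lemma φ2_inj : Function.Injective φ2 := by
  have hsurj : LinearMap.range φ2.toLinearMap = ⊤ := LinearMap.range_eq_top.2 φ2_surj
  have hrn := LinearMap.finrank_range_add_finrank_ker (φ2.toLinearMap)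
  rw [hsurj, finrank_top] at hrn
  have hM : Module.finrank ℂ (Matrix (Fin 2) (Fin 2) ℂ) = 4 := by
    simp [Module.finrank_matrix]
  have hker : Module.finrank ℂ (LinearMap.ker φ2.toLinearMap) = 0 := by
    have := cl2_finrank_le
    omega
  have hbot : LinearMap.ker φ2.toLinearMap = ⊥ := Submodule.finrank_eq_zero.1 hker
  exact LinearMap.ker_eq_bot.1 hbot

def cl2Equiv : CliffordAlgebra (Qn 2) ≃ₐ[ℂ] Matrix (Fin 2) (Fin 2) ℂ :=
  AlgEquiv.ofBijective φ2 ⟨φ2_inj, φ2_surj⟩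
section OmegaLemmas

def ω : CliffordAlgebra (Qn 2) := ε 0 * ε 1

lemma omega_sq : ω * ω = -1 := by
  have ha : ε (0 : Fin 2) * ε 0 = 1 := ε_sq 0
  have hb : ε (1 : Fin 2) * ε 1 = 1 := ε_sq 1
  have hba : ε (1 : Fin 2) * ε 0 = -(ε 0 * ε 1) := ε_anticomm (by decide)
  have e1 : ε (1 : Fin 2) * (ε 0 * ε 1) = -(ε 0) := by
    rw [← mul_assoc, hba, neg_mul, mul_assoc, hb, mul_one]
  rw [ω, mul_assoc, e1, mul_neg, ha]

lemma omega_iota (w : Fin 2 → ℂ) :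
    ω * CliffordAlgebra.ι (Qn 2) w = -(CliffordAlgebra.ι (Qn 2) w * ω) := by
  have ha : ε (0 : Fin 2) * ε 0 = 1 := ε_sq 0
  have hb : ε (1 : Fin 2) * ε 1 = 1 := ε_sq 1
  have hba : ε (1 : Fin 2) * ε 0 = -(ε 0 * ε 1) := ε_anticomm (by decide)
  have h' : w = w 0 • Pi.single (M := fun _ => ℂ) 0 1
      + w 1 • Pi.single (M := fun _ => ℂ) 1 1 := by
    funext k; fin_cases k <;> simp [Pi.single_apply]
  have hw : (CliffordAlgebra.ι (Qn 2)) w = w 0 • ε 0 + w 1 • ε 1 := by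
    conv_lhs => rw [h', map_add, map_smul, map_smul]
  have h0 : ω * ε 0 = -(ε 0 * ω) := by
    rw [ω, mul_assoc, hba, mul_neg]
  have h1 : ω * ε 1 = -(ε 1 * ω) := by
    rw [ω, mul_assoc, hb, mul_one, ← mul_assoc, hba, neg_mul, neg_neg, mul_assoc, hb, mul_one]
  rw [hw, mul_add, add_mul, mul_smul_comm, mul_smul_comm, smul_mul_assoc, smul_mul_assoc,
    h0, h1, smul_neg, smul_neg, neg_add]

end OmegaLemmas

section Split

variable {M : Type*} [AddCommGroup M] [Module ℂ M] (Q₁ : QuadraticForm ℂ M)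

open CliffordAlgebra in
/-- the linear map `(v, w) ↦ I • (ι v ⊗ ω) + 1 ⊗ ι w`. -/
def splitFun : (M × (Fin 2 → ℂ)) →ₗ[ℂ]
    (CliffordAlgebra Q₁ ⊗[ℂ] CliffordAlgebra (Qn 2)) :=
  Complex.I • (((TensorProduct.mk ℂ _ _).flip ω) ∘ₗ (ι Q₁) ∘ₗ (LinearMap.fst ℂ M (Fin 2 → ℂ)))
    + (TensorProduct.mk ℂ (CliffordAlgebra Q₁) (CliffordAlgebra (Qn 2)) 1) ∘ₗ
        (ι (Qn 2)) ∘ₗ (LinearMap.snd ℂ M (Fin 2 → ℂ))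

lemma splitFun_apply (v : M) (w : Fin 2 → ℂ) :
    splitFun Q₁ (v, w) = Complex.I • (CliffordAlgebra.ι Q₁ v ⊗ₜ[ℂ] ω)
      + 1 ⊗ₜ[ℂ] CliffordAlgebra.ι (Qn 2) w := rfl

lemma splitFun_sq (x : M × (Fin 2 → ℂ)) :
    splitFun Q₁ x * splitFun Q₁ x
      = algebraMap ℂ (CliffordAlgebra Q₁ ⊗[ℂ] CliffordAlgebra (Qn 2)) ((Q₁.prod (Qn 2)) x) := by
  obtain ⟨v, w⟩ := x
  rw [splitFun_apply]
  set A : CliffordAlgebra Q₁ ⊗[ℂ] CliffordAlgebra (Qn 2) := CliffordAlgebra.ι Q₁ v ⊗ₜ[ℂ] ω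
  set B : CliffordAlgebra Q₁ ⊗[ℂ] CliffordAlgebra (Qn 2) := 1 ⊗ₜ[ℂ] CliffordAlgebra.ι (Qn 2) w
  have hAA : A * A = -(Q₁ v • 1) := by
    show (_ ⊗ₜ[ℂ] _) * (_ ⊗ₜ[ℂ] _) = _
    rw [Algebra.TensorProduct.tmul_mul_tmul, CliffordAlgebra.ι_sq_scalar, omega_sq,
      Algebra.algebraMap_eq_smul_one]
    rw [TensorProduct.tmul_neg, ← TensorProduct.smul_tmul', ← Algebra.TensorProduct.one_def]
  have hBB : B * B = (Qn 2) w • 1 := by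
    show (_ ⊗ₜ[ℂ] _) * (_ ⊗ₜ[ℂ] _) = _
    rw [Algebra.TensorProduct.tmul_mul_tmul, CliffordAlgebra.ι_sq_scalar, one_mul,
      Algebra.algebraMap_eq_smul_one, TensorProduct.tmul_smul, ← Algebra.TensorProduct.one_def]
  have hABBA : A * B + B * A = 0 := by
    show (_ ⊗ₜ[ℂ] _) * (_ ⊗ₜ[ℂ] _) + (_ ⊗ₜ[ℂ] _) * (_ ⊗ₜ[ℂ] _) = 0
    rw [Algebra.TensorProduct.tmul_mul_tmul, Algebra.TensorProduct.tmul_mul_tmul,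
      mul_one, one_mul, ← TensorProduct.tmul_add, omega_iota]
    simp
  have expand : (Complex.I • A + B) * (Complex.I • A + B)
      = Complex.I • (Complex.I • (A * A)) + Complex.I • (A * B + B * A) + B * B := by
    rw [add_mul, mul_add, mul_add, smul_mul_assoc, smul_mul_assoc, mul_smul_comm, mul_smul_comm,
      smul_add]
    abel
  rw [expand, hAA, hABBA, hBB, smul_zero, smul_smul, Complex.I_mul_I]
  rw [QuadraticMap.prod_apply, map_add, Algebra.algebraMap_eq_smul_one,
    Algebra.algebraMap_eq_smul_one]
  simp [add_smul]

/-- Forward algebra map `Cl(Q₁ × Qn 2) → Cl(Q₁) ⊗ Cl(Qn 2)`. -/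
def splitHom : CliffordAlgebra (Q₁.prod (Qn 2)) →ₐ[ℂ]
    CliffordAlgebra Q₁ ⊗[ℂ] CliffordAlgebra (Qn 2) :=
  CliffordAlgebra.lift _ ⟨splitFun Q₁, splitFun_sq Q₁⟩

lemma splitHom_ι (v : M) (w : Fin 2 → ℂ) :
    splitHom Q₁ (CliffordAlgebra.ι _ (v, w))
      = Complex.I • (CliffordAlgebra.ι Q₁ v ⊗ₜ[ℂ] ω) + 1 ⊗ₜ[ℂ] CliffordAlgebra.ι (Qn 2) w := by
  rw [splitHom, CliffordAlgebra.lift_ι_apply, splitFun_apply]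

end Split
section Split2

variable {M : Type*} [AddCommGroup M] [Module ℂ M] (Q₁ : QuadraticForm ℂ M)

open CliffordAlgebra

/-- Right inclusion. -/
def gR : CliffordAlgebra (Qn 2) →ₐ[ℂ] CliffordAlgebra (Q₁.prod (Qn 2)) :=
  CliffordAlgebra.map (QuadraticMap.Isometry.inr Q₁ (Qn 2))

lemma gR_ι (w : Fin 2 → ℂ) :
    gR Q₁ (ι (Qn 2) w) = ι (Q₁.prod (Qn 2)) ((0 : M), w) := by
  rw [gR, CliffordAlgebra.map_apply_ι]
  rfl

/-- the image of `ω` in the Clifford algebra of the product. -/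
def ϖ : CliffordAlgebra (Q₁.prod (Qn 2)) := gR Q₁ ω

lemma varpi_eq : ϖ Q₁ = ι (Q₁.prod (Qn 2)) ((0 : M), Pi.single 0 1)
    * ι (Q₁.prod (Qn 2)) ((0 : M), Pi.single 1 1) := by
  rw [ϖ, ω, map_mul, gR_ι, gR_ι]

lemma varpi_sq : ϖ Q₁ * ϖ Q₁ = -1 := by
  rw [ϖ, ← map_mul, omega_sq, map_neg, map_one]

lemma iota_prod_anticomm (v : M) (w : Fin 2 → ℂ) :
    ι (Q₁.prod (Qn 2)) (v, 0) * ι (Q₁.prod (Qn 2)) (0, w)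
      = -(ι (Q₁.prod (Qn 2)) (0, w) * ι (Q₁.prod (Qn 2)) (v, 0)) := by
  have h := CliffordAlgebra.ι_mul_ι_add_swap (Q := Q₁.prod (Qn 2)) (v, 0) (0, w)
  have hp : QuadraticMap.polar (Q₁.prod (Qn 2)) (v, 0) (0, w) = 0 := by
    rw [QuadraticMap.polar_prod]
    simp [QuadraticMap.polar]
  rw [hp] at h
  simp only [map_zero] at h
  linear_combination (norm := noncomm_ring) h

lemma varpi_iota_anticomm (w : Fin 2 → ℂ) :
    ϖ Q₁ * ι (Q₁.prod (Qn 2)) ((0 : M), w) = -(ι (Q₁.prod (Qn 2)) ((0 : M), w) * ϖ Q₁) := by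
  have := congrArg (gR Q₁) (omega_iota w)
  rw [map_mul, map_neg, map_mul, gR_ι] at this
  rw [← ϖ] at this
  exact this

lemma varpi_comm (v : M) :
    ι (Q₁.prod (Qn 2)) (v, 0) * ϖ Q₁ = ϖ Q₁ * ι (Q₁.prod (Qn 2)) (v, 0) := by
  set X := ι (Q₁.prod (Qn 2)) ((0 : M), Pi.single (M := fun _ => ℂ) 0 1)
  set Y := ι (Q₁.prod (Qn 2)) ((0 : M), Pi.single (M := fun _ => ℂ) 1 1)
  set A := ι (Q₁.prod (Qn 2)) (v, (0 : Fin 2 → ℂ))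
  have hX : A * X = -(X * A) := iota_prod_anticomm Q₁ v _
  have hY : A * Y = -(Y * A) := iota_prod_anticomm Q₁ v _
  rw [varpi_eq, ← mul_assoc, hX, neg_mul, mul_assoc, hY, mul_neg, neg_neg, mul_assoc]

/-- the linear map `v ↦ I • (ι (v,0) * ϖ)`. -/
def gLfun : M →ₗ[ℂ] CliffordAlgebra (Q₁.prod (Qn 2)) :=
  Complex.I • ((LinearMap.mulRight ℂ (ϖ Q₁)) ∘ₗ (ι (Q₁.prod (Qn 2))) ∘ₗ
    (LinearMap.inl ℂ M (Fin 2 → ℂ)))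

lemma gLfun_apply (v : M) :
    gLfun Q₁ v = Complex.I • (ι (Q₁.prod (Qn 2)) (v, 0) * ϖ Q₁) := rfl

lemma gLfun_sq (v : M) :
    gLfun Q₁ v * gLfun Q₁ v = algebraMap ℂ (CliffordAlgebra (Q₁.prod (Qn 2))) (Q₁ v) := by
  rw [gLfun_apply]
  set A := ι (Q₁.prod (Qn 2)) (v, (0 : Fin 2 → ℂ))
  have hsq : A * A = algebraMap ℂ _ (Q₁ v) := by
    rw [CliffordAlgebra.ι_sq_scalar]
    congr 1
    rw [QuadraticMap.prod_apply, map_zero, add_zero]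
  have key : (A * ϖ Q₁) * (A * ϖ Q₁) = -(algebraMap ℂ _ (Q₁ v)) := by
    rw [mul_assoc, ← mul_assoc (ϖ Q₁) A (ϖ Q₁), ← varpi_comm, mul_assoc A (ϖ Q₁) (ϖ Q₁),
      varpi_sq, mul_neg_one, mul_neg, hsq]
  rw [smul_mul_assoc, mul_smul_comm, smul_smul, Complex.I_mul_I, key, neg_one_smul, neg_neg]

/-- Left inclusion `Cl(Q₁) → Cl(Q₁ × Qn 2)`, `ι v ↦ I • (ι (v,0) * ϖ)`. -/
def gL : CliffordAlgebra Q₁ →ₐ[ℂ] CliffordAlgebra (Q₁.prod (Qn 2)) :=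
  CliffordAlgebra.lift _ ⟨gLfun Q₁, gLfun_sq Q₁⟩

lemma gL_ι (v : M) : gL Q₁ (ι Q₁ v) = Complex.I • (ι (Q₁.prod (Qn 2)) (v, 0) * ϖ Q₁) := by
  rw [gL, CliffordAlgebra.lift_ι_apply, gLfun_apply]

lemma gLR_commute (x : CliffordAlgebra Q₁) (y : CliffordAlgebra (Qn 2)) :
    Commute (gL Q₁ x) (gR Q₁ y) := by
  induction x using CliffordAlgebra.induction with
  | algebraMap r =>
      rw [AlgHom.commutes]
      exact Algebra.commute_algebraMap_left r _
  | ι v =>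
      induction y using CliffordAlgebra.induction with
      | algebraMap r =>
          rw [AlgHom.commutes]
          exact (Algebra.commute_algebraMap_left r _).symm
      | ι w =>
          rw [gL_ι, gR_ι]
          show Complex.I • (ι (Q₁.prod (Qn 2)) (v, 0) * ϖ Q₁) * ι (Q₁.prod (Qn 2)) ((0 : M), w)
            = ι (Q₁.prod (Qn 2)) ((0 : M), w)
              * (Complex.I • (ι (Q₁.prod (Qn 2)) (v, 0) * ϖ Q₁))
          rw [smul_mul_assoc, mul_smul_comm]
          congr 1
          rw [mul_assoc, varpi_iota_anticomm, mul_neg, ← mul_assoc, iota_prod_anticomm, neg_mul,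
            neg_neg, mul_assoc]
      | mul a b ha hb => rw [map_mul]; exact ha.mul_right hb
      | add a b ha hb => rw [map_add]; exact ha.add_right hb
  | mul a b ha hb => rw [map_mul]; exact ha.mul_left hb
  | add a b ha hb => rw [map_add]; exact ha.add_left hb

end Split2
section Split3

variable {M : Type*} [AddCommGroup M] [Module ℂ M] (Q₁ : QuadraticForm ℂ M)

open CliffordAlgebra

def splitInv : (CliffordAlgebra Q₁ ⊗[ℂ] CliffordAlgebra (Qn 2)) →ₐ[ℂ]
    CliffordAlgebra (Q₁.prod (Qn 2)) :=
  Algebra.TensorProduct.lift (gL Q₁) (gR Q₁) (gLR_commute Q₁)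

lemma splitInv_tmul (a : CliffordAlgebra Q₁) (b : CliffordAlgebra (Qn 2)) :
    splitInv Q₁ (a ⊗ₜ[ℂ] b) = gL Q₁ a * gR Q₁ b :=
  Algebra.TensorProduct.lift_tmul _ _ _ _ _

lemma splitHom_iota_left (v : M) :
    splitHom Q₁ (ι (Q₁.prod (Qn 2)) (v, 0)) = Complex.I • (ι Q₁ v ⊗ₜ[ℂ] ω) := by
  rw [splitHom_ι, map_zero, TensorProduct.tmul_zero, add_zero]

lemma splitHom_varpi : splitHom Q₁ (ϖ Q₁) = 1 ⊗ₜ[ℂ] ω := by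
  rw [varpi_eq, map_mul, splitHom_ι, splitHom_ι]
  simp [ω, Algebra.TensorProduct.tmul_mul_tmul]

lemma splitInv_splitHom : (splitInv Q₁).comp (splitHom Q₁) = AlgHom.id ℂ _ := by
  refine CliffordAlgebra.hom_ext (LinearMap.ext fun x => ?_)
  obtain ⟨v, w⟩ := x
  show splitInv Q₁ (splitHom Q₁ (ι (Q₁.prod (Qn 2)) (v, w))) = ι (Q₁.prod (Qn 2)) (v, w)
  have hvw : (v, (0 : Fin 2 → ℂ)) + ((0 : M), w) = (v, w) := by simp
  rw [splitHom_ι, map_add, map_smul, splitInv_tmul, splitInv_tmul, map_one, one_mul, gL_ι, gR_ι]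
  have hϖ : gR Q₁ ω = ϖ Q₁ := rfl
  rw [hϖ, smul_mul_assoc, mul_assoc, varpi_sq, mul_neg_one, smul_neg, smul_neg, smul_smul,
    Complex.I_mul_I, neg_smul, one_smul, neg_neg, ← map_add, hvw]

lemma splitHom_splitInv : (splitHom Q₁).comp (splitInv Q₁) = AlgHom.id ℂ _ := by
  refine Algebra.TensorProduct.ext ?_ ?_
  · refine CliffordAlgebra.hom_ext (LinearMap.ext fun v => ?_)
    show splitHom Q₁ (splitInv Q₁ (ι Q₁ v ⊗ₜ[ℂ] 1)) = ι Q₁ v ⊗ₜ[ℂ] 1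
    rw [splitInv_tmul, map_one, mul_one, gL_ι, map_smul, map_mul, splitHom_iota_left,
      splitHom_varpi, smul_mul_assoc, Algebra.TensorProduct.tmul_mul_tmul, mul_one, omega_sq,
      TensorProduct.tmul_neg, smul_neg, smul_neg, smul_smul, Complex.I_mul_I, neg_smul, one_smul,
      neg_neg]
  · refine CliffordAlgebra.hom_ext (LinearMap.ext fun w => ?_)
    show splitHom Q₁ (splitInv Q₁ ((1 : CliffordAlgebra Q₁) ⊗ₜ[ℂ] ι (Qn 2) w))
      = (1 : CliffordAlgebra Q₁) ⊗ₜ[ℂ] ι (Qn 2) w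
    rw [splitInv_tmul, map_one, one_mul, gR_ι, splitHom_ι, map_zero, TensorProduct.zero_tmul,
      smul_zero, zero_add]

/-- Splitting off a 2-dimensional factor of the Clifford algebra. -/
def splitEquiv : CliffordAlgebra (Q₁.prod (Qn 2)) ≃ₐ[ℂ]
    (CliffordAlgebra Q₁ ⊗[ℂ] CliffordAlgebra (Qn 2)) :=
  AlgEquiv.ofAlgHom (splitHom Q₁) (splitInv Q₁) (splitHom_splitInv Q₁) (splitInv_splitHom Q₁)

end Split3
section Induction

/-- Splitting the standard form on `Fin (n+2) → ℂ` into a product. -/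
def QnSplit (n : ℕ) : QuadraticMap.IsometryEquiv (Qn (n + 2)) ((Qn n).prod (Qn 2)) where
  toLinearEquiv := (LinearEquiv.funCongrLeft ℂ ℂ finSumFinEquiv).trans
      (LinearEquiv.sumArrowLequivProdArrow _ _ ℂ ℂ)
  map_app' := by
    intro x
    rw [QuadraticMap.prod_apply, Qn_apply, Qn_apply, Qn_apply,
      ← Equiv.sum_comp finSumFinEquiv (fun k => x k * x k), Fintype.sum_sum_type]
    simp [LinearEquiv.funCongrLeft]

def cl0toC : CliffordAlgebra (Qn 0) →ₐ[ℂ] ℂ :=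
  CliffordAlgebra.lift _ ⟨0, fun v => by simp [Qn_apply]⟩

def cl0Equiv : CliffordAlgebra (Qn 0) ≃ₐ[ℂ] ℂ :=
  AlgEquiv.ofAlgHom cl0toC (Algebra.ofId ℂ _)
    (AlgHom.ext fun r => by
      simp [Algebra.ofId_apply])
    (by
      refine CliffordAlgebra.hom_ext (LinearMap.ext fun v => ?_)
      have hv : (CliffordAlgebra.ι (Qn 0)) v = 0 := by
        rw [Subsingleton.elim v 0, map_zero]
      simp [hv])

def cMat1 : ℂ ≃ₐ[ℂ] Matrix (Fin 1) (Fin 1) ℂ :=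
  AlgEquiv.ofBijective (Algebra.ofId ℂ _)
    ⟨fun a b h => by
      simpa [Matrix.algebraMap_matrix_apply] using congrArg (fun m => m 0 0) h,
     fun M => ⟨M 0 0, by
      ext i j
      fin_cases i <;> fin_cases j <;>
        simp [Algebra.ofId_apply, Matrix.algebraMap_matrix_apply]⟩⟩

def matStep (k : ℕ) :
    (Matrix (Fin (2 ^ k)) (Fin (2 ^ k)) ℂ ⊗[ℂ] Matrix (Fin 2) (Fin 2) ℂ) ≃ₐ[ℂ]
      Matrix (Fin (2 ^ (k + 1))) (Fin (2 ^ (k + 1))) ℂ :=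
  (matrixEquivTensor (Fin 2) ℂ (Matrix (Fin (2 ^ k)) (Fin (2 ^ k)) ℂ)).symm.trans <|
    (Matrix.compAlgEquiv (Fin 2) (Fin (2 ^ k)) ℂ ℂ).trans <|
      Matrix.reindexAlgEquiv ℂ ℂ (finProdFinEquiv.trans (finCongr (pow_succ' 2 k).symm))

lemma clQn_iso : ∀ k : ℕ,
    Nonempty (CliffordAlgebra (Qn (2 * k)) ≃ₐ[ℂ] Matrix (Fin (2 ^ k)) (Fin (2 ^ k)) ℂ)
  | 0 => ⟨cl0Equiv.trans cMat1⟩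
  | (k + 1) => by
      obtain ⟨e⟩ := clQn_iso k
      exact ⟨(CliffordAlgebra.equivOfIsometry (QnSplit (2 * k))).trans <|
        (splitEquiv (Qn (2 * k))).trans <|
          (Algebra.TensorProduct.congr e cl2Equiv).trans (matStep k)⟩

end Induction
section BaseChange

variable (V : Type*) [NormedAddCommGroup V] [InnerProductSpace ℝ V] [FiniteDimensional ℝ V]

theorem baseChange_isometry (n : ℕ) (hdim : Module.finrank ℝ V = n)
    (Q : QuadraticForm ℝ V) (hQ : ∀ v : V, Q v = -‖v‖ ^ 2) :
    Nonempty (QuadraticMap.IsometryEquiv (Q.baseChange ℂ) (Qn n)) := by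
  let b : OrthonormalBasis (Fin n) ℝ V := (stdOrthonormalBasis ℝ V).reindex (finCongr hdim)
  let bc : Module.Basis (Fin n) ℂ (ℂ ⊗[ℝ] V) := Algebra.TensorProduct.basis ℂ b.toBasis
  have hbc : ∀ i, bc i = 1 ⊗ₜ[ℝ] b i := fun i => by
    simp [bc, Algebra.TensorProduct.basis_apply]
  have hQb : ∀ i, Q (b i) = -1 := fun i => by
    rw [hQ, b.orthonormal.1 i]; norm_num
  have hQbc : ∀ i, (Q.baseChange ℂ) (bc i) = -1 := fun i => by
    rw [hbc, QuadraticForm.baseChange_tmul, hQb i, mul_one]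
    norm_num
  have horth : (QuadraticMap.associated (R := ℂ) (Q.baseChange ℂ)).IsOrthoᵢ bc := by
    intro i j hij
    have hb1 : ‖b i‖ = 1 := b.orthonormal.1 i
    have hb2 : ‖b j‖ = 1 := b.orthonormal.1 j
    have hin : inner ℝ (b i) (b j) = (0 : ℝ) := b.orthonormal.2 hij
    have hQa : QuadraticMap.associated (R := ℝ) Q (b i) (b j) = 0 := by
      rw [QuadraticMap.associated_apply, hQ, hQ, hQ, norm_add_sq_real, hb1, hb2, hin]
      norm_num
    show QuadraticMap.associated (R := ℂ) (Q.baseChange ℂ) (bc i) (bc j) = 0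
    rw [QuadraticForm.associated_baseChange, hbc, hbc,
      LinearMap.BilinForm.baseChange_tmul, hQa]
    simp
  have hrepr2 : (Q.baseChange ℂ).basisRepr bc
      = QuadraticMap.weightedSumSquares ℂ (fun _ : Fin n => (-1 : Units ℂ)) := by
    rw [QuadraticMap.basisRepr_eq_of_iIsOrtho _ _ horth]
    ext v
    rw [QuadraticMap.weightedSumSquares_apply, QuadraticMap.weightedSumSquares_apply]
    refine Finset.sum_congr rfl fun i _ => ?_
    rw [hQbc]
    simp [Units.smul_def]
  have e2 : QuadraticMap.IsometryEquiv ((Q.baseChange ℂ).basisRepr bc) (Qn n) := by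
    rw [hrepr2]
    exact QuadraticForm.isometryEquivSumSquaresUnits _
  exact ⟨((Q.baseChange ℂ).isometryEquivBasisRepr bc).trans e2⟩

end BaseChange

end SpinorAux

/-- **Existence of the spinor module** (Proposition 5.1, existence part).
If `V` is a real inner product space of even dimension `2ℓ` and `Q v = -‖v‖²`,
then the complexified Clifford algebra `Cl(V) ⊗ ℂ` is isomorphic, as a
`ℂ`-algebra, to the algebra of `2^ℓ × 2^ℓ` complex matrices, i.e. to
`End_ℂ(S)` for a complex vector space `S` of dimension `2^ℓ`. -/
theorem spinor_module_exists
    (V : Type*) [NormedAddCommGroup V] [InnerProductSpace ℝ V] [FiniteDimensional ℝ V]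
    (ℓ : ℕ) (hdim : Module.finrank ℝ V = 2 * ℓ)
    (Q : QuadraticForm ℝ V) (hQ : ∀ v : V, Q v = -‖v‖ ^ 2) :
    Nonempty (CliffordAlgebra (Q.baseChange ℂ) ≃ₐ[ℂ]
      Matrix (Fin (2 ^ ℓ)) (Fin (2 ^ ℓ)) ℂ) := by
  obtain ⟨e1⟩ := SpinorAux.baseChange_isometry V (2 * ℓ) hdim Q hQ
  obtain ⟨e2⟩ := SpinorAux.clQn_iso ℓ
  exact ⟨(CliffordAlgebra.equivOfIsometry e1).trans e2⟩
end
end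

section
/- Let V be a real inner product space of even dimension 2ℓ, Q(v) = -‖v‖², A = Cl(V) ⊗ ℂ, and let S be an A-module, finite-dimensional over ℂ, whose structure homomorphism A → End_ℂ(S) is bijective. Then there exists a positive-definite Hermitian inner product h on S such that for every v ∈ V the Clifford action c(v) (the action on S of the element ι(v) ∈ Cl(V) ⊆ Cl(V) ⊗ ℂ) is skew-adjoint, i.e. h(c(v)s, t) = -h(s, c(v)t) for all s, t ∈ S. Moreover any two positive-definite Hermitian inner products with this property differ by a positive real scalar. -/
open TensorProduct

/-- A positive-definite Hermitian inner product `h` on a module `S` over the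
complexified Clifford algebra `Cl(V) ⊗ ℂ` (conjugate-linear in the first slot,
Hermitian-symmetric, positive definite) for which each Clifford action
`c(v) = ι(1 ⊗ v) • ·`, `v ∈ V`, is skew-adjoint. -/
def IsSkewAdjointHermitianInner
    {V : Type*} [NormedAddCommGroup V] [InnerProductSpace ℝ V]
    (Q : QuadraticForm ℝ V)
    (S : Type*) [AddCommGroup S] [Module ℂ S]
    [Module (CliffordAlgebra (Q.baseChange ℂ)) S]
    (h : S → S → ℂ) : Prop :=
  (∀ s t u : S, h (s + t) u = h s u + h t u) ∧
  (∀ (c : ℂ) (s t : S), h (c • s) t = (starRingEnd ℂ) c * h s t) ∧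
  (∀ s t : S, h t s = (starRingEnd ℂ) (h s t)) ∧
  (∀ s : S, s ≠ 0 → 0 < (h s s).re) ∧
  (∀ (v : V) (s t : S),
    h ((CliffordAlgebra.ι (Q.baseChange ℂ) ((1 : ℂ) ⊗ₜ[ℝ] v)) • s) t =
      - h s ((CliffordAlgebra.ι (Q.baseChange ℂ) ((1 : ℂ) ⊗ₜ[ℝ] v)) • t))

set_option linter.unusedSectionVars false

namespace SpinorAux

variable {S : Type*} [AddCommGroup S] [Module ℂ S]

/-- A pre-inner-product: additive and conjugate-homogeneous in the first slot,
Hermitian symmetric, with nonnegative and (off zero) positive real diagonal. -/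
def PreForm (h : S → S → ℂ) : Prop :=
  (∀ s t u : S, h (s + t) u = h s u + h t u) ∧
  (∀ (c : ℂ) (s t : S), h (c • s) t = (starRingEnd ℂ) c * h s t) ∧
  (∀ s t : S, h t s = (starRingEnd ℂ) (h s t)) ∧
  (∀ s : S, 0 ≤ (h s s).re) ∧
  (∀ s : S, s ≠ 0 → 0 < (h s s).re)

section basic

variable {h : S → S → ℂ}
  (h1 : ∀ s t u : S, h (s + t) u = h s u + h t u)
  (h2 : ∀ (c : ℂ) (s t : S), h (c • s) t = (starRingEnd ℂ) c * h s t)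
  (h3 : ∀ s t : S, h t s = (starRingEnd ℂ) (h s t))

include h1 in
theorem zero_left (t : S) : h 0 t = 0 := by
  have := h1 0 0 t
  rw [add_zero] at this
  linear_combination -this

include h1 h3 in
theorem zero_right (s : S) : h s 0 = 0 := by
  rw [h3, zero_left h1, map_zero]

include h1 h3 in
theorem add_right (u s t : S) : h u (s + t) = h u s + h u t := by
  rw [h3, h1, map_add, ← h3, ← h3]

include h2 h3 in
theorem smul_right (c : ℂ) (s t : S) : h s (c • t) = c * h s t := by
  rw [h3, h2, map_mul, Complex.conj_conj, ← h3]

include h1 in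
theorem neg_left (s t : S) : h (-s) t = -h s t := by
  have := h1 s (-s) t
  rw [add_neg_cancel, zero_left h1] at this
  linear_combination -this

include h1 h3 in
theorem neg_right (s t : S) : h s (-t) = -h s t := by
  rw [h3, neg_left h1, map_neg, ← h3]

include h1 h2 in
theorem sum_left {ι : Type*} (A : Finset ι) (f : ι → S) (t : S) :
    h (∑ i ∈ A, f i) t = ∑ i ∈ A, h (f i) t := by
  classical
  induction A using Finset.cons_induction with
  | empty => simpa using zero_left h1 t
  | cons i A hi ih => rw [Finset.sum_cons, Finset.sum_cons, h1, ih]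

include h1 h3 in
theorem sum_right {ι : Type*} (A : Finset ι) (f : ι → S) (s : S) :
    h s (∑ i ∈ A, f i) = ∑ i ∈ A, h s (f i) := by
  classical
  induction A using Finset.cons_induction with
  | empty => simpa using zero_right h1 h3 s
  | cons i A hi ih => rw [Finset.sum_cons, Finset.sum_cons, add_right h1 h3, ih]

end basic

/-- Negating both slots of a `PreForm` changes nothing. -/
theorem PreForm.neg_neg {h : S → S → ℂ} (hp : PreForm h) (s t : S) :
    h (-s) (-t) = h s t := by
  obtain ⟨h1, h2, h3, -, -⟩ := hp
  rw [neg_left h1, neg_right h1 h3, _root_.neg_neg]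

/-- The averaging construction: `avgF act h0 l` sums `h0 (act I s, act I t)` over
all "subproducts" of the operators indexed by the list `l`. -/
def avgF {ι : Type*} (act : ι → S → S) (h0 : S → S → ℂ) : List ι → S → S → ℂ
  | [] => h0
  | i :: l => fun s t => avgF act h0 l s t + avgF act h0 l (act i s) (act i t)

variable {ι : Type*} {act : ι → S → S} {h0 : S → S → ℂ}

theorem avgF_cons (i : ι) (l : List ι) (s t : S) :
    avgF act h0 (i :: l) s t
      = avgF act h0 l s t + avgF act h0 l (act i s) (act i t) := rfl

theorem avgF_preForm
    (hadd : ∀ i (s t : S), act i (s + t) = act i s + act i t)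
    (hsmul : ∀ i (c : ℂ) (s : S), act i (c • s) = c • act i s)
    (hp : PreForm h0) : ∀ l : List ι, PreForm (avgF act h0 l) := by
  intro l
  induction l with
  | nil => exact hp
  | cons i l ih =>
    obtain ⟨i1, i2, i3, i4, i5⟩ := ih
    refine ⟨?_, ?_, ?_, ?_, ?_⟩
    · intro s t u
      simp only [avgF_cons, i1, hadd]; ring
    · intro c s t
      simp only [avgF_cons, hsmul, i2]; ring
    · intro s t
      rw [avgF_cons, avgF_cons, i3 s t, i3 (act i s) (act i t), ← map_add]
    · intro s
      rw [avgF_cons, Complex.add_re]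
      exact add_nonneg (i4 s) (i4 (act i s))
    · intro s hs
      rw [avgF_cons, Complex.add_re]
      exact add_pos_of_pos_of_nonneg (i5 s hs) (i4 (act i s))

theorem avgF_invariant
    (hadd : ∀ i (s t : S), act i (s + t) = act i s + act i t)
    (hsmul : ∀ i (c : ℂ) (s : S), act i (c • s) = c • act i s)
    (hp : PreForm h0)
    (hsq : ∀ i (s : S), act i (act i s) = -s)
    (hanti : ∀ i j, i ≠ j → ∀ s : S, act i (act j s) = -(act j (act i s))) :
    ∀ l : List ι, ∀ j ∈ l, ∀ s t : S,
      avgF act h0 l (act j s) (act j t) = avgF act h0 l s t := by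
  intro l
  induction l with
  | nil => intro j hj; exact absurd hj List.not_mem_nil
  | cons i l ih =>
    intro j hj s t
    have hpl : PreForm (avgF act h0 l) := avgF_preForm hadd hsmul hp l
    by_cases hji : j = i
    · subst hji
      show avgF act h0 l (act j s) (act j t)
          + avgF act h0 l (act j (act j s)) (act j (act j t)) = _
      rw [hsq, hsq, hpl.neg_neg]
      show _ = avgF act h0 l s t + avgF act h0 l (act j s) (act j t)
      ring
    · have hjl : j ∈ l := by
        rcases List.mem_cons.mp hj with h | h
        · exact absurd h hji
        · exact h
      show avgF act h0 l (act j s) (act j t)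
          + avgF act h0 l (act i (act j s)) (act i (act j t)) = _
      rw [ih j hjl s t, hanti i j (fun h => hji h.symm), hanti i j (fun h => hji h.symm),
        hpl.neg_neg, ih j hjl (act i s) (act i t)]
      rw [avgF_cons]

/-- Skew-adjointness from unitarity plus square `-1`. -/
theorem skew_of_unitary {h : S → S → ℂ} (hp : PreForm h) {c : S → S}
    (hu : ∀ s t : S, h (c s) (c t) = h s t) (hc2 : ∀ s : S, c (c s) = -s)
    (s t : S) : h (c s) t = -h s (c t) := by
  obtain ⟨h1, h2, h3, -, -⟩ := hp
  have ht : t = -(c (c t)) := by rw [hc2, neg_neg]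
  calc h (c s) t = h (c s) (-(c (c t))) := by rw [← ht]
    _ = -h (c s) (c (c t)) := neg_right h1 h3 _ _
    _ = -h s (c t) := by rw [hu]

end SpinorAux

open SpinorAux

/-- **Invariant Hermitian structure on the spinor module** (Proposition 5.1).
On the spinor module `S` of `Cl(V) ⊗ ℂ` (a finite-dimensional complex module whose
structure homomorphism to `End_ℂ(S)` is bijective) there exists a positive-definite
Hermitian inner product making every Clifford action `c(v)`, `v ∈ V`, skew-adjoint,
and any two such inner products differ by a positive real scalar. -/
theorem spinor_hermitian_exists_unique
    (V : Type*) [NormedAddCommGroup V] [InnerProductSpace ℝ V] [FiniteDimensional ℝ V]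
    (ℓ : ℕ) (hdim : Module.finrank ℝ V = 2 * ℓ)
    (Q : QuadraticForm ℝ V) (hQ : ∀ v : V, Q v = -‖v‖ ^ 2)
    (S : Type*) [AddCommGroup S] [Module ℂ S]
    [Module (CliffordAlgebra (Q.baseChange ℂ)) S]
    [IsScalarTower ℂ (CliffordAlgebra (Q.baseChange ℂ)) S] [FiniteDimensional ℂ S]
    (hS : Function.Bijective
      ⇑(Algebra.lsmul ℂ ℂ S :
        CliffordAlgebra (Q.baseChange ℂ) →ₐ[ℂ] Module.End ℂ S)) :
    ∃ h : S → S → ℂ, IsSkewAdjointHermitianInner Q S h ∧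
      ∀ h' : S → S → ℂ, IsSkewAdjointHermitianInner Q S h' →
        ∃ r : ℝ, 0 < r ∧ ∀ s t : S, h' s t = (r : ℂ) * h s t := by
  classical
  -- abbreviations
  set Cl := CliffordAlgebra (Q.baseChange ℂ) with hCl
  let e := stdOrthonormalBasis ℝ V
  let a : Fin (Module.finrank ℝ V) → Cl := fun i =>
    CliffordAlgebra.ι (Q.baseChange ℂ) ((1 : ℂ) ⊗ₜ[ℝ] (e i))
  let act : Fin (Module.finrank ℝ V) → S → S := fun i s => a i • s
  -- an initial positive definite hermitian form
  let bS := Module.finBasis ℂ S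
  let h0 : S → S → ℂ := fun s t => ∑ i, (starRingEnd ℂ) (bS.repr s i) * (bS.repr t i)
  have hp0 : PreForm h0 := by
    refine ⟨?_, ?_, ?_, ?_, ?_⟩
    · intro s t u
      simp only [h0, map_add, Finsupp.add_apply, map_add, add_mul, Finset.sum_add_distrib]
    · intro c s t
      simp only [h0, map_smul, Finsupp.smul_apply, smul_eq_mul, map_mul, Finset.mul_sum]
      exact Finset.sum_congr rfl fun i _ => by ring
    · intro s t
      simp only [h0, map_sum, map_mul, Complex.conj_conj]
      exact Finset.sum_congr rfl fun i _ => by ring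
    · intro s
      simp only [h0]
      rw [Complex.re_sum]
      refine Finset.sum_nonneg fun i _ => ?_
      rw [mul_comm, Complex.mul_conj]
      simp [Complex.normSq_nonneg]
    · intro s hs
      simp only [h0]
      rw [Complex.re_sum]
      have hrepr : bS.repr s ≠ 0 := bS.repr.map_ne_zero_iff.mpr hs
      obtain ⟨i, hi⟩ := Finsupp.ne_iff.mp hrepr
      rw [Finsupp.zero_apply] at hi
      refine Finset.sum_pos' (fun j _ => ?_) ⟨i, Finset.mem_univ i, ?_⟩
      · rw [mul_comm, Complex.mul_conj]; simp [Complex.normSq_nonneg]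
      · rw [mul_comm, Complex.mul_conj]; simpa using Complex.normSq_pos.mpr hi
  -- Clifford relations for the orthonormal basis
  have hQval : ∀ v : V, (Q.baseChange ℂ) ((1 : ℂ) ⊗ₜ[ℝ] v) = (Q v : ℂ) := by
    intro v
    rw [QuadraticForm.baseChange_tmul, mul_one, Complex.real_smul, mul_one]
  have smul_comm' : ∀ (x : Cl) (c : ℂ) (s : S), x • (c • s) = c • (x • s) := by
    intro x c s
    rw [← algebraMap_smul Cl c s, ← mul_smul, ← Algebra.commutes, mul_smul, algebraMap_smul]
  have hadd : ∀ i (s t : S), act i (s + t) = act i s + act i t := fun i s t => smul_add _ _ _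
  have hsmul : ∀ i (c : ℂ) (s : S), act i (c • s) = c • act i s := fun i c s => smul_comm' _ _ _
  have hsq : ∀ i (s : S), act i (act i s) = -s := by
    intro i s
    show a i • (a i • s) = -s
    rw [← mul_smul, CliffordAlgebra.ι_sq_scalar, algebraMap_smul, hQval, hQ,
      (stdOrthonormalBasis ℝ V).orthonormal.1 i]
    norm_num
  have horth : ∀ i j, i ≠ j →
      (Q.baseChange ℂ).IsOrtho ((1 : ℂ) ⊗ₜ[ℝ] (e i)) ((1 : ℂ) ⊗ₜ[ℝ] (e j)) := by
    intro i j hij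
    rw [QuadraticMap.isOrtho_def, ← TensorProduct.tmul_add, hQval, hQval, hQval, hQ, hQ, hQ,
      norm_add_sq_real, (stdOrthonormalBasis ℝ V).orthonormal.2 hij]
    push_cast
    ring
  have hanti : ∀ i j, i ≠ j → ∀ s : S, act i (act j s) = -(act j (act i s)) := by
    intro i j hij s
    show a i • (a j • s) = -(a j • (a i • s))
    rw [← mul_smul, CliffordAlgebra.ι_mul_ι_comm_of_isOrtho (horth i j hij), neg_smul, mul_smul]
  -- the averaged form
  let h : S → S → ℂ := avgF act h0 (List.finRange (Module.finrank ℝ V))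
  have hpre : PreForm h := avgF_preForm hadd hsmul hp0 _
  obtain ⟨p1, p2, p3, p4, p5⟩ := hpre
  have hpre : PreForm h := ⟨p1, p2, p3, p4, p5⟩
  have hinv : ∀ i (s t : S), h (act i s) (act i t) = h s t := fun i s t =>
    avgF_invariant hadd hsmul hp0 hsq hanti _ i (List.mem_finRange i) s t
  have hskewb : ∀ i (s t : S), h (act i s) t = -h s (act i t) := fun i =>
    skew_of_unitary hpre (hinv i) (hsq i)
  -- decomposition of a general Clifford action
  have hdecomp : ∀ v : V, (1 : ℂ) ⊗ₜ[ℝ] v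
      = ∑ i, ((e.toBasis.repr v i : ℝ) : ℂ) • ((1 : ℂ) ⊗ₜ[ℝ] (e i)) := by
    intro v
    conv_lhs => rw [← Module.Basis.sum_repr e.toBasis v]
    rw [TensorProduct.tmul_sum]
    refine Finset.sum_congr rfl fun i _ => ?_
    rw [TensorProduct.tmul_smul, ← algebraMap_smul ℂ (e.toBasis.repr v i),
      OrthonormalBasis.coe_toBasis]
    norm_num
  have hact : ∀ (v : V) (s : S),
      (CliffordAlgebra.ι (Q.baseChange ℂ) ((1 : ℂ) ⊗ₜ[ℝ] v)) • s
        = ∑ i, ((e.toBasis.repr v i : ℝ) : ℂ) • (act i s) := by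
    intro v s
    rw [hdecomp v, map_sum, Finset.sum_smul]
    exact Finset.sum_congr rfl fun i _ => by rw [map_smul, smul_assoc]
  have hskew : ∀ (v : V) (s t : S),
      h ((CliffordAlgebra.ι (Q.baseChange ℂ) ((1 : ℂ) ⊗ₜ[ℝ] v)) • s) t
        = -h s ((CliffordAlgebra.ι (Q.baseChange ℂ) ((1 : ℂ) ⊗ₜ[ℝ] v)) • t) := by
    intro v s t
    rw [hact v s, hact v t, sum_left p1 p2, sum_right p1 p3, ← Finset.sum_neg_distrib]
    refine Finset.sum_congr rfl fun i _ => ?_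
    rw [p2, smul_right p2 p3, Complex.conj_ofReal, hskewb i s t]
    ring
  refine ⟨h, ⟨p1, p2, p3, p5, hskew⟩, ?_⟩
  -- uniqueness
  rintro h' ⟨q1, q2, q3, q5, qskew⟩
  rcases subsingleton_or_nontrivial S with hsub | hnt
  · refine ⟨1, one_pos, fun s t => ?_⟩
    have hs0 : s = (0 : S) := Subsingleton.elim _ _
    have ht0 : t = (0 : S) := Subsingleton.elim _ _
    rw [hs0, ht0, zero_left q1, zero_left p1, mul_zero]
  · -- expansion in the basis `bS`
    have hexp : ∀ (g : S → S → ℂ),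
        (∀ s t u : S, g (s + t) u = g s u + g t u) →
        (∀ (c : ℂ) (s t : S), g (c • s) t = (starRingEnd ℂ) c * g s t) →
        ∀ s t : S, g s t = ∑ i, (starRingEnd ℂ) (bS.repr s i) * g (bS i) t := by
      intro g g1 g2 s t
      conv_lhs => rw [← Module.Basis.sum_repr bS s]
      rw [sum_left g1 g2]
      exact Finset.sum_congr rfl fun i _ => g2 _ _ _
    have hne : ∀ u : S, h u u = 0 → u = 0 := by
      intro u hu
      by_contra hzero
      have := p5 u hzero
      rw [hu] at this
      simp at this
    -- the comparison operator T
    let L : S →ₗ[ℂ] (Fin (Module.finrank ℂ S) → ℂ) :=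
      { toFun := fun u i => h (bS i) u
        map_add' := fun x y => funext fun i => add_right p1 p3 _ _ _
        map_smul' := fun c x => funext fun i => by
          simpa using smul_right p2 p3 c (bS i) x }
    have Linj : Function.Injective L := by
      intro x y hxy
      have hzero : ∀ u : S, L u = 0 → u = 0 := by
        intro u hu
        refine hne u ?_
        rw [hexp h p1 p2 u u]
        refine Finset.sum_eq_zero fun i _ => ?_
        have : h (bS i) u = 0 := congrFun hu i
        rw [this, mul_zero]
      have : L (x - y) = 0 := by rw [map_sub, hxy, sub_self]
      have := hzero _ this
      exact sub_eq_zero.mp this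
    have Lsurj : Function.Surjective L := by
      refine (LinearMap.injective_iff_surjective_of_finrank_eq_finrank ?_).mp Linj
      simp [Module.finrank_pi]
    let eL := LinearEquiv.ofBijective L ⟨Linj, Lsurj⟩
    let T : S → S := fun t => eL.symm (fun i => h' (bS i) t)
    have hbT : ∀ i t, h (bS i) (T t) = h' (bS i) t := by
      intro i t
      have : L (T t) = fun i => h' (bS i) t := eL.apply_symm_apply _
      exact congrFun this i
    have hkey : ∀ s t : S, h' s t = h s (T t) := by
      intro s t
      rw [hexp h' q1 q2 s t, hexp h p1 p2 s (T t)]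
      exact Finset.sum_congr rfl fun i _ => by rw [hbT]
    have hnd : ∀ x y : S, (∀ s : S, h s x = h s y) → x = y := by
      intro x y hxy
      have hsub : ∀ s : S, h s (x - y) = 0 := by
        intro s
        rw [sub_eq_add_neg, add_right p1 p3, neg_right p1 p3, hxy, add_neg_cancel]
      have : h (x - y) (x - y) = 0 := hsub _
      exact sub_eq_zero.mp (hne _ this)
    -- T is linear
    have Tadd : ∀ x y : S, T (x + y) = T x + T y := by
      intro x y
      show eL.symm _ = eL.symm _ + eL.symm _
      rw [← map_add]
      congr 1
      funext i
      exact add_right q1 q3 _ _ _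
    have Tsmul : ∀ (c : ℂ) (x : S), T (c • x) = c • T x := by
      intro c x
      show eL.symm _ = c • eL.symm _
      rw [← map_smul]
      congr 1
      funext i
      simpa using smul_right q2 q3 c (bS i) x
    -- T commutes with the Clifford action of vectors
    have commv : ∀ (v : V) (t : S),
        T ((CliffordAlgebra.ι (Q.baseChange ℂ) ((1 : ℂ) ⊗ₜ[ℝ] v)) • t)
          = (CliffordAlgebra.ι (Q.baseChange ℂ) ((1 : ℂ) ⊗ₜ[ℝ] v)) • T t := by
      intro v t
      apply hnd
      intro s
      have e1 : h s (T ((CliffordAlgebra.ι (Q.baseChange ℂ) ((1 : ℂ) ⊗ₜ[ℝ] v)) • t))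
          = h' s ((CliffordAlgebra.ι (Q.baseChange ℂ) ((1 : ℂ) ⊗ₜ[ℝ] v)) • t) :=
        (hkey _ _).symm
      rw [e1]
      have e2 : h' s ((CliffordAlgebra.ι (Q.baseChange ℂ) ((1 : ℂ) ⊗ₜ[ℝ] v)) • t)
          = -h' ((CliffordAlgebra.ι (Q.baseChange ℂ) ((1 : ℂ) ⊗ₜ[ℝ] v)) • s) t := by
        linear_combination qskew v s t
      rw [e2, hkey]
      have e3 : h ((CliffordAlgebra.ι (Q.baseChange ℂ) ((1 : ℂ) ⊗ₜ[ℝ] v)) • s) (T t)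
          = -h s ((CliffordAlgebra.ι (Q.baseChange ℂ) ((1 : ℂ) ⊗ₜ[ℝ] v)) • T t) :=
        hskew v s (T t)
      rw [e3, neg_neg]
    -- T commutes with the whole Clifford algebra action
    have commCl : ∀ (y : Cl) (x : S), T (y • x) = y • T x := by
      intro y
      induction y using CliffordAlgebra.induction with
      | algebraMap c =>
        intro x
        rw [algebraMap_smul, algebraMap_smul, Tsmul]
      | ι m =>
        induction m using TensorProduct.induction_on with
        | zero =>
          intro x
          rw [map_zero, zero_smul, zero_smul]
          show T 0 = 0
          have := Tadd 0 0
          rw [add_zero] at this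
          exact left_eq_add.mp this
        | tmul c v =>
          intro x
          have hcv : (c ⊗ₜ[ℝ] v : ℂ ⊗[ℝ] V) = c • ((1 : ℂ) ⊗ₜ[ℝ] v) := by
            rw [TensorProduct.smul_tmul', smul_eq_mul, mul_one]
          rw [hcv, map_smul, smul_assoc, Tsmul, commv, smul_assoc]
        | add m1 m2 ih1 ih2 =>
          intro x
          rw [map_add, add_smul, add_smul, Tadd, ih1, ih2]
      | mul y1 y2 ih1 ih2 =>
        intro x
        rw [mul_smul, ih1, ih2, mul_smul]
      | add y1 y2 ih1 ih2 =>
        intro x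
        rw [add_smul, add_smul, Tadd, ih1, ih2]
    -- T commutes with every endomorphism, hence is scalar
    have commEnd : ∀ (E : Module.End ℂ S) (x : S), T (E x) = E (T x) := by
      intro E x
      obtain ⟨y, hy⟩ := hS.2 E
      have hyx : ∀ z : S, E z = y • z := by
        intro z
        rw [← hy]
        rfl
      rw [hyx, hyx, commCl]
    have hm : 0 < Module.finrank ℂ S := Module.finrank_pos
    set i0 : Fin (Module.finrank ℂ S) := ⟨0, hm⟩ with hi0
    set μ : ℂ := (bS.coord i0) (T (bS i0)) with hμ
    have hT_smul : ∀ s : S, T s = μ • s := by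
      intro s
      have hE := commEnd ((bS.coord i0).smulRight s) (bS i0)
      have h1' : (bS.coord i0) (bS i0) = 1 := by
        simp [Module.Basis.coord_apply, Module.Basis.repr_self]
      rw [LinearMap.smulRight_apply, LinearMap.smulRight_apply, h1', one_smul] at hE
      exact hE
    have final : ∀ s t : S, h' s t = μ * h s t := by
      intro s t
      rw [hkey, hT_smul, smul_right p2 p3]
    -- μ is real and positive
    have hz_im : (h (bS i0) (bS i0)).im = 0 := by
      have := p3 (bS i0) (bS i0)
      exact Complex.conj_eq_iff_im.mp this.symm
    have hz_pos : 0 < (h (bS i0) (bS i0)).re := p5 _ (bS.ne_zero i0)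
    have hz'_im : (h' (bS i0) (bS i0)).im = 0 := by
      have := q3 (bS i0) (bS i0)
      exact Complex.conj_eq_iff_im.mp this.symm
    have hz'_pos : 0 < (h' (bS i0) (bS i0)).re := q5 _ (bS.ne_zero i0)
    have hzz : h' (bS i0) (bS i0) = μ * h (bS i0) (bS i0) := final _ _
    have hμ_im : μ.im = 0 := by
      have him := congrArg Complex.im hzz
      rw [Complex.mul_im, hz_im, mul_zero, zero_add, hz'_im] at him
      exact (mul_eq_zero.mp him.symm).resolve_right (ne_of_gt hz_pos)
    have hμ_re : 0 < μ.re := by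
      have hre := congrArg Complex.re hzz
      rw [Complex.mul_re, hz_im, mul_zero, sub_zero] at hre
      have : μ.re = (h' (bS i0) (bS i0)).re / (h (bS i0) (bS i0)).re := by
        field_simp [ne_of_gt hz_pos] at hre ⊢
        linarith [hre]
      rw [this]
      exact div_pos hz'_pos hz_pos
    refine ⟨μ.re, hμ_re, fun s t => ?_⟩
    rw [final s t]
    congr 1
    exact (Complex.ext (by simp) (by simp [hμ_im])).symm
end

section
/- Let V be an n-dimensional real inner product space and Q(v) = -‖v‖². Let e, f : Fin n → V be two orthonormal bases whose change-of-basis matrix has positive determinant (i.e. the two bases induce the same orientation of V). Then the ordered products in the Clifford algebra coincide: ι(e₁)·ι(e₂)⋯ι(eₙ) = ι(f₁)·ι(f₂)⋯ι(fₙ) in Cl(V). -/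
open CliffordAlgebra
open scoped RealInnerProductSpace

section Aux

variable {V : Type*} [AddCommGroup V] [Module ℝ V]

/-- Contraction by a dual vector vanishing on all factors kills the product. -/
lemma contractLeft_prod_eq_zero {Q : QuadraticForm ℝ V} (d : Module.Dual ℝ V) :
    ∀ l : List V, (∀ v ∈ l, d v = 0) →
      contractLeft (Q := Q) d (l.map (ι Q)).prod = 0 := by
  intro l
  induction l with
  | nil => intro _; simp [contractLeft_algebraMap]
  | cons a t ih =>
    intro h
    have ha : d a = 0 := h a List.mem_cons_self
    have ht := ih fun v hv => h v (List.mem_cons_of_mem _ hv)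
    simp only [List.map_cons, List.prod_cons]
    rw [contractLeft_ι_mul, ht, ha, zero_smul, mul_zero, sub_zero]

lemma changeForm_prod {Q Q' : QuadraticForm ℝ V} {B : LinearMap.BilinForm ℝ V}
    (h : B.toQuadraticMap = Q' - Q) :
    ∀ l : List V, l.Pairwise (fun a b => B a b = 0) →
      changeForm h (l.map (ι Q)).prod = (l.map (ι Q')).prod := by
  intro l
  induction l with
  | nil => intro _; simp
  | cons a t ih =>
    intro hp
    rw [List.pairwise_cons] at hp
    simp only [List.map_cons, List.prod_cons]
    rw [changeForm_ι_mul, ih hp.2,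
      contractLeft_prod_eq_zero (Q := Q') (B a) t hp.1, sub_zero]

end Aux

/-- **The chirality element depends only on the orientation** (Section 5.1).
If `e` and `f` are two orthonormal bases of an `n`-dimensional real inner product
space `V` whose change-of-basis matrix has positive determinant, and `Q v = -‖v‖²`,
then the ordered products `ι(e₁)⋯ι(eₙ)` and `ι(f₁)⋯ι(fₙ)` coincide in `Cl(V)`. -/
theorem chirality_element_well_defined
    (V : Type*) [NormedAddCommGroup V] [InnerProductSpace ℝ V] [FiniteDimensional ℝ V]
    (n : ℕ) (e f : OrthonormalBasis (Fin n) ℝ V)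
    (hdet : 0 < e.toBasis.det ⇑f)
    (Q : QuadraticForm ℝ V) (hQ : ∀ v : V, Q v = -‖v‖ ^ 2) :
    (List.ofFn fun i => CliffordAlgebra.ι Q (e i)).prod =
      (List.ofFn fun i => CliffordAlgebra.ι Q (f i)).prod := by
  classical
  set B : LinearMap.BilinForm ℝ V := QuadraticMap.associated (R := ℝ) (-Q) with hB
  have h : B.toQuadraticMap = (0 : QuadraticForm ℝ V) - Q :=
    changeForm.associated_neg_proof
  -- B vanishes on orthogonal pairs
  have hBortho : ∀ v w : V, (inner ℝ v w : ℝ) = 0 → B v w = 0 := by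
    intro v w hvw
    have h2 : B v w + B v w = QuadraticMap.polar (⇑(-Q)) v w := by
      have := congrArg (fun F : LinearMap.BilinForm ℝ V => F v w)
        (QuadraticMap.two_nsmul_associated ℝ (-Q))
      simp only [LinearMap.smul_apply, smul_eq_mul, two_smul, LinearMap.add_apply,
          QuadraticMap.polarBilin_apply_apply] at this
      rw [hB]
      convert this using 1
    have hpolar : QuadraticMap.polar (⇑(-Q)) v w = 0 := by
      simp only [QuadraticMap.polar, QuadraticMap.neg_apply, hQ]
      have : ‖v + w‖ ^ 2 = ‖v‖ ^ 2 + 2 * (inner ℝ v w : ℝ) + ‖w‖ ^ 2 := by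
        rw [@norm_add_sq_real]
      rw [this, hvw]
      ring
    rw [hpolar] at h2
    linarith
  -- pairwise orthogonality of the bases
  have hpe : (List.ofFn ⇑e).Pairwise (fun a b => B a b = 0) := by
    rw [List.pairwise_ofFn]
    intro i j hij
    exact hBortho _ _ (e.orthonormal.2 (ne_of_lt hij))
  have hpf : (List.ofFn ⇑f).Pairwise (fun a b => B a b = 0) := by
    rw [List.pairwise_ofFn]
    intro i j hij
    exact hBortho _ _ (f.orthonormal.2 (ne_of_lt hij))
  -- the exterior algebra images are the ιMulti values
  have key : ∀ g : OrthonormalBasis (Fin n) ℝ V,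
      (List.ofFn ⇑g).Pairwise (fun a b => B a b = 0) →
      changeForm h (List.ofFn fun i => CliffordAlgebra.ι Q (g i)).prod =
        ExteriorAlgebra.ιMulti ℝ n ⇑g := by
    intro g hg
    rw [ExteriorAlgebra.ιMulti_apply]
    have h1 : (List.ofFn fun i => CliffordAlgebra.ι Q (g i)) = (List.ofFn ⇑g).map (ι Q) := by
      rw [List.map_ofFn]; rfl
    have h2 : (List.ofFn fun i => ExteriorAlgebra.ι ℝ (g i))
        = (List.ofFn ⇑g).map (ι (0 : QuadraticForm ℝ V)) := by
      rw [List.map_ofFn]; rfl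
    rw [h1, h2, changeForm_prod h _ hg]
  -- determinant is 1
  have hdet1 : e.toBasis.det ⇑f = 1 := by
    rcases e.det_to_matrix_orthonormalBasis_real f with h1 | h1
    · exact h1
    · rw [h1] at hdet; linarith
  -- ιMulti as a multiple of the determinant
  have hio : (ExteriorAlgebra.ιMulti ℝ n : V [⋀^Fin n]→ₗ[ℝ] ExteriorAlgebra ℝ V)
      = (LinearMap.toSpanSingleton ℝ _
          (ExteriorAlgebra.ιMulti ℝ n ⇑e.toBasis)).compAlternatingMap e.toBasis.det := by
    refine Module.Basis.ext_alternating e.toBasis fun v hv => ?_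
    have hbij : Function.Bijective v := Finite.injective_iff_bijective.1 hv
    let σ : Equiv.Perm (Fin n) := Equiv.ofBijective v hbij
    have hσ : (fun i => e.toBasis (v i)) = ⇑e.toBasis ∘ σ := rfl
    rw [hσ]
    rw [AlternatingMap.map_perm, AlternatingMap.map_perm]
    congr 1
    simp only [LinearMap.compAlternatingMap_apply, LinearMap.toSpanSingleton_apply,
      Module.Basis.det_self, one_smul]
  have hmulti : ExteriorAlgebra.ιMulti ℝ n ⇑f = ExteriorAlgebra.ιMulti ℝ n ⇑e := by
    have he' : ExteriorAlgebra.ιMulti ℝ n ⇑e.toBasis = ExteriorAlgebra.ιMulti ℝ n ⇑e := by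
      rw [OrthonormalBasis.coe_toBasis]
    rw [congrArg (fun g => g ⇑f) hio]
    simp [LinearMap.toSpanSingleton_apply, hdet1, he']
  have hinj : Function.Injective (changeForm h) := by
    have : Function.Injective (changeFormEquiv (Q := Q) (Q' := 0) h) :=
      (changeFormEquiv h).injective
    exact this
  apply hinj
  rw [key e hpe, key f hpf, hmulti]
end

section
/- Let n ≥ 1 and let K be a topologically closed subgroup of the unitary group U(n) of n×n complex matrices. Suppose that for every nonzero x ∈ ℂⁿ there exists a skew-Hermitian matrix A (Aᴴ = -A) with exp(tA) ∈ K for all t ∈ ℝ and ⟨A·x, x⟩ ≠ 0. Then every polynomial function p : ℂⁿ → ℂ (the evaluation of a multivariate polynomial in the n coordinates) satisfying p(g·x) = p(x) for all g ∈ K and all x ∈ ℂⁿ is constant. -/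
open Matrix NormedSpace

variable {n : ℕ}

/-- eval is differentiable -/
lemma eval_differentiable (P : MvPolynomial (Fin n) ℂ) :
    Differentiable ℂ (fun v : Fin n → ℂ => MvPolynomial.eval v P) := by
  induction P using MvPolynomial.induction_on with
  | C a => simpa using differentiable_const a
  | add p q hp hq => simp only [map_add]; exact hp.add hq
  | mul_X p i hp =>
      simp only [map_mul, MvPolynomial.eval_X]; exact hp.mul ((ContinuousLinearMap.proj i :
        (Fin n → ℂ) →L[ℂ] ℂ).differentiable)

/-- matrix acting on fixed vector, as a linear map in the matrix -/
noncomputable def appLM (x : Fin n → ℂ) :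
    Matrix (Fin n) (Fin n) ℂ →ₗ[ℂ] (Fin n → ℂ) where
  toFun M := M.mulVec x
  map_add' M N := Matrix.add_mulVec M N x
  map_smul' c M := smul_mulVec c M x

lemma hasDerivAt_exp_mulVec (A : Matrix (Fin n) (Fin n) ℂ) (x : Fin n → ℂ) (z : ℂ) :
    HasDerivAt (fun w : ℂ => (exp (w • A)).mulVec x)
      ((exp (z • A) * A).mulVec x) z := by
  letI : SeminormedRing (Matrix (Fin n) (Fin n) ℂ) := Matrix.linftyOpSemiNormedRing
  letI : NormedRing (Matrix (Fin n) (Fin n) ℂ) := Matrix.linftyOpNormedRing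
  letI : NormedAlgebra ℂ (Matrix (Fin n) (Fin n) ℂ) := Matrix.linftyOpNormedAlgebra
  have h := hasDerivAt_exp_smul_const (𝕂 := ℂ) A z
  have := ((appLM x).toContinuousLinearMap.hasFDerivAt
    (x := exp (z • A))).comp_hasDerivAt z h
  exact this

lemma coe_smul_mat (t : ℝ) (A : Matrix (Fin n) (Fin n) ℂ) :
    ((t : ℂ) • A) = t • A := by
  rw [show ((t:ℂ)) = t • (1:ℂ) by simp, smul_one_smul]

lemma hasDerivAt_coord (B : Matrix (Fin n) (Fin n) ℂ) (y : Fin n → ℂ) (i : Fin n) :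
    HasDerivAt (fun t : ℝ => (exp ((t : ℂ) • B)).mulVec y i)
      (B.mulVec y i) (0 : ℝ) := by
  have h1 : HasDerivAt (fun w : ℂ => (exp (w • B)).mulVec y i)
      (B.mulVec y i) (0 : ℂ) := by
    have := (hasDerivAt_pi.mp (hasDerivAt_exp_mulVec B y 0)) i
    simpa [exp_zero] using this
  exact h1.comp_ofReal

lemma skew_pairing_re_zero (A : Matrix (Fin n) (Fin n) ℂ) (hA : Aᴴ = -A)
    (y : Fin n → ℂ) :
    (∑ i, (starRingEnd ℂ) (A.mulVec y i) * y i) = 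
      -(starRingEnd ℂ) (∑ i, (starRingEnd ℂ) (A.mulVec y i) * y i) := by
  have hA' : ∀ i j, (starRingEnd ℂ) (A i j) = -(A j i) := by
    intro i j
    have := congrFun (congrFun hA j) i
    simpa [conjTranspose_apply] using this
  rw [eq_neg_iff_add_eq_zero]
  simp only [mulVec, dotProduct, map_sum, _root_.map_mul, Finset.sum_mul, Finset.mul_sum,
    Complex.conj_conj]
  rw [Finset.sum_comm (γ := Fin n)]
  rw [← Finset.sum_add_distrib]
  refine Finset.sum_eq_zero fun i _ => ?_
  rw [← Finset.sum_add_distrib]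
  refine Finset.sum_eq_zero fun j _ => ?_
  rw [hA' j i]
  ring

lemma hasDerivAt_normSq_comp {f : ℝ → ℂ} {f' : ℂ} {t : ℝ} (h : HasDerivAt f f' t) :
    HasDerivAt (fun s => Complex.normSq (f s))
      (2 * ((f t).re * f'.re + (f t).im * f'.im)) t := by
  have hre : HasDerivAt (fun s => (f s).re) f'.re t := by
    exact (Complex.reCLM.hasFDerivAt (x := f t)).comp_hasDerivAt t h
  have him : HasDerivAt (fun s => (f s).im) f'.im t := by
    exact (Complex.imCLM.hasFDerivAt (x := f t)).comp_hasDerivAt t h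
  have := (hre.mul hre).add (him.mul him)
  have heq : (fun s => Complex.normSq (f s))
      = fun s => (f s).re * (f s).re + (f s).im * (f s).im := by
    funext s; simp [Complex.normSq_apply]
  rw [heq]
  refine this.congr_deriv ?_
  ring

set_option maxHeartbeats 1000000 in
/-- **Invariant polynomials when `Φ⁻¹(0) = {0}`** (Proposition 12.9, second claim).
Let `K` be a topologically closed subgroup of the unitary group `U(n)`. If for every
nonzero `x ∈ ℂⁿ` there is a skew-Hermitian matrix `A` with `exp(tA) ∈ K` for all
`t ∈ ℝ` and `⟨A·x, x⟩ ≠ 0`, then every `K`-invariant polynomial function on `ℂⁿ`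
is constant. -/
theorem invariant_polynomials_constant
    (n : ℕ) (hn : 1 ≤ n)
    (K : Set (Matrix (Fin n) (Fin n) ℂ))
    (hKclosed : IsClosed K)
    (hKunitary : ∀ g ∈ K, g ∈ Matrix.unitaryGroup (Fin n) ℂ)
    (hone : (1 : Matrix (Fin n) (Fin n) ℂ) ∈ K)
    (hmul : ∀ g ∈ K, ∀ h ∈ K, g * h ∈ K)
    (hinv : ∀ g ∈ K, star g ∈ K)
    (hmoment : ∀ x : Fin n → ℂ, x ≠ 0 →
      ∃ A : Matrix (Fin n) (Fin n) ℂ, Aᴴ = -A ∧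
        (∀ t : ℝ, NormedSpace.exp (t • A) ∈ K) ∧
        (∑ i, (starRingEnd ℂ) (A.mulVec x i) * x i) ≠ 0)
    (P : MvPolynomial (Fin n) ℂ)
    (hP : ∀ g ∈ K, ∀ x : Fin n → ℂ,
      MvPolynomial.eval (g.mulVec x) P = MvPolynomial.eval x P) :
    ∀ x y : Fin n → ℂ, MvPolynomial.eval x P = MvPolynomial.eval y P := by
  -- the "Lie algebra" elements
  set 𝔤 : Set (Matrix (Fin n) (Fin n) ℂ) :=
    {A | Aᴴ = -A ∧ ∀ t : ℝ, exp (t • A) ∈ K} with h𝔤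
  -- invariance of P under complexified one-parameter subgroups
  have hGenInv : ∀ A ∈ 𝔤, ∀ z : ℂ, ∀ v : Fin n → ℂ,
      MvPolynomial.eval ((exp (z • A)).mulVec v) P = MvPolynomial.eval v P := by
    rintro A ⟨hA1, hA2⟩ z v
    set f : ℂ → ℂ := fun w => MvPolynomial.eval ((exp (w • A)).mulVec v) P with hf
    have hdiff : Differentiable ℂ f := fun w =>
      ((eval_differentiable P) _).comp w (hasDerivAt_exp_mulVec A v w).differentiableAt
    have hreal : ∀ t : ℝ, f t = MvPolynomial.eval v P := by
      intro t
      have := hP _ (hA2 t) v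
      simpa [hf, coe_smul_mat] using this
    have hfreq : ∃ᶠ w in nhdsWithin (0 : ℂ) {(0:ℂ)}ᶜ,
        f w = (fun _ => MvPolynomial.eval v P) w := by
      have h1 : Filter.Tendsto (fun k : ℕ => ((((k : ℝ) + 1)⁻¹ : ℝ) : ℂ))
          Filter.atTop (nhdsWithin (0 : ℂ) {(0:ℂ)}ᶜ) := by
        apply tendsto_nhdsWithin_of_tendsto_nhds_of_eventually_within
        · have : Filter.Tendsto (fun k : ℕ => (((k : ℝ) + 1)⁻¹ : ℝ))
              Filter.atTop (nhds 0) :=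
            tendsto_one_div_add_atTop_nhds_zero_nat.congr (by simp [one_div])
          have h0 := (Complex.continuous_ofReal.tendsto 0).comp this
          rw [Complex.ofReal_zero] at h0
          exact h0
        · refine Filter.Eventually.of_forall fun k => ?_
          simp only [Set.mem_compl_iff, Set.mem_singleton_iff]
          exact Complex.ofReal_ne_zero.mpr (by positivity)
      refine h1.frequently (Filter.Frequently.of_forall fun k => ?_)
      exact hreal _
    have := AnalyticOnNhd.eq_of_frequently_eq
      (fun w _ => (hdiff.analyticAt w)) (fun w _ => analyticAt_const) hfreq
    exact congrFun this z
  -- the complexified monoid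
  set gen : Set (Matrix (Fin n) (Fin n) ℂ) :=
    {g | ∃ z : ℂ, ∃ A ∈ 𝔤, g = exp (z • A)} with hgen
  set M : Submonoid (Matrix (Fin n) (Fin n) ℂ) := Submonoid.closure gen with hM
  have hMInv : ∀ g ∈ M, ∀ v : Fin n → ℂ,
      MvPolynomial.eval (g.mulVec v) P = MvPolynomial.eval v P := by
    intro g hg
    induction hg using Submonoid.closure_induction with
    | mem g hg =>
        obtain ⟨z, A, hA, rfl⟩ := hg
        exact hGenInv A hA z
    | one => intro v; rw [Matrix.one_mulVec]
    | mul a b _ _ ha hb =>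
        intro v
        rw [← Matrix.mulVec_mulVec, ha, hb]
  -- the key claim : P x = P 0 for every x
  have key : ∀ x : Fin n → ℂ, MvPolynomial.eval x P = MvPolynomial.eval (0 : Fin n → ℂ) P := by
    intro x
    set Ω : Set (Fin n → ℂ) :=
      closure ((fun g : Matrix (Fin n) (Fin n) ℂ => g.mulVec x) '' M) with hΩ
    have hxΩ : x ∈ Ω := subset_closure ⟨1, M.one_mem, Matrix.one_mulVec x⟩
    have hΩP : ∀ w ∈ Ω, MvPolynomial.eval w P = MvPolynomial.eval x P := by
      have hcl : IsClosed {w : Fin n → ℂ |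
          MvPolynomial.eval w P = MvPolynomial.eval x P} :=
        isClosed_eq (MvPolynomial.continuous_eval P) continuous_const
      refine fun w hw => closure_minimal ?_ hcl hw
      rintro w ⟨g, hg, rfl⟩
      exact hMInv g hg x
    have hΩstable : ∀ A ∈ 𝔤, ∀ z : ℂ, ∀ w ∈ Ω, (exp (z • A)).mulVec w ∈ Ω := by
      intro A hA z w hw
      have hcont : Continuous fun v : Fin n → ℂ => (exp (z • A)).mulVec v := by
        have := LinearMap.continuous_of_finiteDimensional
          (Matrix.mulVecLin (exp (z • A)))
        simpa [Matrix.coe_mulVecLin] using this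
      refine map_mem_closure hcont hw ?_
      rintro v ⟨g, hg, rfl⟩
      exact ⟨_, M.mul_mem (Submonoid.subset_closure ⟨z, A, hA, rfl⟩) hg,
        (Matrix.mulVec_mulVec x _ g).symm⟩
    set N : (Fin n → ℂ) → ℝ := fun v => ∑ i, Complex.normSq (v i) with hN
    have hNcont : Continuous N :=
      continuous_finset_sum _ fun i _ =>
        Complex.continuous_normSq.comp (continuous_apply i)
    set C : Set (Fin n → ℂ) := Ω ∩ {v | N v ≤ N x} with hC
    have hCclosed : IsClosed C :=
      isClosed_closure.inter (isClosed_le hNcont continuous_const)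
    have hCsub : C ⊆ Metric.closedBall 0 (Real.sqrt (N x)) := by
      rintro v ⟨-, hv⟩
      rw [Metric.mem_closedBall, dist_zero_right,
        pi_norm_le_iff_of_nonneg (Real.sqrt_nonneg _)]
      intro i
      have h1 : Complex.normSq (v i) ≤ N x :=
        le_trans (Finset.single_le_sum (f := fun i => Complex.normSq (v i))
          (fun j _ => Complex.normSq_nonneg _) (Finset.mem_univ i)) hv
      calc ‖v i‖ = Real.sqrt (Complex.normSq (v i)) := by
            rw [Complex.norm_def]
        _ ≤ _ := Real.sqrt_le_sqrt h1
    have hCcompact : IsCompact C :=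
      (isCompact_closedBall (0 : Fin n → ℂ) _).of_isClosed_subset hCclosed hCsub
    have hxC : x ∈ C := ⟨hxΩ, show N x ≤ N x from le_rfl⟩
    obtain ⟨y, hyC, hymin⟩ := hCcompact.exists_isMinOn ⟨x, hxC⟩ hNcont.continuousOn
    have hglobal : ∀ w ∈ Ω, N y ≤ N w := by
      intro w hw
      rcases le_or_gt (N w) (N x) with h | h
      · exact hymin ⟨hw, h⟩
      · exact le_trans (hymin hxC) h.le
    have hy0 : y = 0 := by
      by_contra hy
      obtain ⟨A, hA1, hA2, hc⟩ := hmoment y hy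
      set c : ℂ := ∑ i, (starRingEnd ℂ) (A.mulVec y i) * y i with hcdef
      have hskew := skew_pairing_re_zero A hA1 y
      have hcre : c.re = 0 := by
        have := congrArg Complex.re hskew
        simp only [Complex.neg_re, Complex.conj_re] at this
        linarith
      have hcim : c.im ≠ 0 := by
        intro h
        exact hc (Complex.ext hcre h)
      set B : Matrix (Fin n) (Fin n) ℂ := Complex.I • A with hB
      set v : ℝ → (Fin n → ℂ) := fun t => (exp ((t : ℂ) • B)).mulVec y with hv
      have hv0 : v 0 = y := by
        simp [hv, exp_zero, Matrix.one_mulVec]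
      have hvΩ : ∀ t : ℝ, v t ∈ Ω := by
        intro t
        have h1 : ((t : ℂ) • B) = (((t : ℂ) * Complex.I) • A) := by
          rw [hB, smul_smul]
        rw [hv]
        simp only [h1]
        exact hΩstable A ⟨hA1, hA2⟩ _ y hyC.1
      set g : ℝ → ℝ := fun t => N (v t) with hg
      have hgd : HasDerivAt g
          (∑ i, 2 * ((y i).re * (B.mulVec y i).re + (y i).im * (B.mulVec y i).im)) 0 := by
        refine HasDerivAt.fun_sum fun i _ => ?_
        have h1 := hasDerivAt_normSq_comp (f := fun t : ℝ => v t i)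
          (f' := B.mulVec y i) (t := 0) (hasDerivAt_coord B y i)
        simpa [hv0] using h1
      have hmin : IsLocalMin g 0 := by
        refine Filter.Eventually.of_forall fun t => ?_
        show g 0 ≤ g t
        have : g 0 = N y := by rw [hg]; simp [hv0]
        rw [this]
        exact hglobal _ (hvΩ t)
      have hD0 := hmin.hasDerivAt_eq_zero hgd
      -- compute the derivative : it equals 2 * c.im ≠ 0
      have hDval : (∑ i, 2 * ((y i).re * (B.mulVec y i).re
          + (y i).im * (B.mulVec y i).im)) = 2 * c.im := by
        rw [hcdef, Complex.im_sum, Finset.mul_sum]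
        refine Finset.sum_congr rfl fun i _ => ?_
        have hBy : B.mulVec y i = Complex.I * (A.mulVec y i) := by
          rw [hB, Matrix.smul_mulVec]
          simp
        rw [hBy]
        simp [Complex.mul_re, Complex.mul_im]
        ring
      rw [hDval] at hD0
      have : c.im = 0 := by linarith
      exact hcim this
    have h0Ω : (0 : Fin n → ℂ) ∈ Ω := hy0 ▸ hyC.1
    exact (hΩP 0 h0Ω).symm
  intro x y
  rw [key x, key y]
end
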